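/- Fix x ∈ ℝ₊^R and consider the convex set 𝒟 = {D ∈ ℝ^R : D_ij = 0 for all ij ∈ Λ₂(x) and D_ij ≥ 0 for all ij ∈ Λ₁(x)}. Then the function D ↦ L(x,D) is finite, nonnegative, continuous and strictly convex on 𝒟, and for every K ≥ 0 the level set {D ∈ 𝒟 : L(x,D) ≤ K} is compact. -/

import Mathlib

open Classical Filter MeasureTheory
open scoped ENNReal

noncomputable section

/-- The M/M/1 cost `l(D‖λ,μ)` that a suitably normalized `M/M/1` queue with arrival rate
`λ` and service rate `μ` follows the drift `D`.  (Lean's conventions `Real.log 0 = 0` and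
`0 * y = 0` implement the convention `0 · log 0 = 0`.) -/
def mmCost (D lam mu : ℝ) : ℝ :=
  D * Real.log ((D + Real.sqrt (D ^ 2 + 4 * lam * mu)) / (2 * lam))
    + lam + mu - Real.sqrt (D ^ 2 + 4 * lam * mu)

/-- The relative entropy `I_p(ν‖λ)` of Poisson processes of intensities `ν` and `λ`.
(Lean's conventions `x / 0 = 0`, `Real.log 0 = 0` and `0 * y = 0` implement the
conventions `0/0 = 0` and `0 · log 0 = 0`.) -/
def poissonEntropy (nu lam : ℝ) : ℝ := nu * Real.log (nu / lam) - nu + lam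

/-- A star network: a finite set `S` of channels with capacities `C i > 0`, and a set `R`
of routes, each route `r` being an unordered pair of distinct channels
`{fst r, snd r}`, with arrival rates `lam r > 0` and service parameters `mu r > 0`. -/
structure StarNetwork (S R : Type*) where
  /-- one endpoint of a route -/
  fst : R → S
  /-- the other endpoint of a route -/
  snd : R → S
  fst_ne_snd : ∀ r, fst r ≠ snd r
  /-- the capacity of each channel -/
  C : S → ℝ
  C_pos : ∀ i, 0 < C i
  /-- the arrival rate on each route -/
  lam : R → ℝ
  lam_pos : ∀ r, 0 < lam r
  /-- the service parameter of each route -/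
  mu : R → ℝ
  mu_pos : ∀ r, 0 < mu r

namespace StarNetwork

variable {S R : Type*} [Fintype S] [Fintype R]

/-- `N.touches i r` means that channel `i` is one of the two endpoints of route `r`. -/
def touches (N : StarNetwork S R) (i : S) (r : R) : Prop :=
  N.fst r = i ∨ N.snd r = i

/-- The load `x_i = ∑_{j : ij ∈ R} x_ij` of channel `i`. -/
def load (N : StarNetwork S R) (x : R → ℝ) (i : S) : ℝ :=
  ∑ r : R, if N.touches i r then x r else 0

/-- The service rate `μ_ij(x) = μ_ij · x_ij · min (C_i / x_i) (C_j / x_j)` if `x_ij > 0`,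
and `μ_ij(x) = 0` if `x_ij = 0`. -/
def srv (N : StarNetwork S R) (x : R → ℝ) (r : R) : ℝ :=
  if 0 < x r then
    N.mu r * x r *
      min (N.C (N.fst r) / N.load x (N.fst r)) (N.C (N.snd r) / N.load x (N.snd r))
  else 0

/-- The face `Λ(x) = {ij ∈ R : x_ij > 0}` of saturated routes. -/
def face (N : StarNetwork S R) (x : R → ℝ) : Set R := {r | 0 < x r}

/-- The jammed routes `Λ₁(x)`: routes `ij` with `x_ij = 0` such that some route of
`Λ(x)` contains `i` or contains `j`. -/
def jammed (N : StarNetwork S R) (x : R → ℝ) : Set R :=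
  {r | x r = 0 ∧ ∃ r' ∈ N.face x, N.touches (N.fst r) r' ∨ N.touches (N.snd r) r'}

/-- The ergodic routes `Λ₂(x) = R \ (Λ(x) ∪ Λ₁(x))`. -/
def ergodicRoutes (N : StarNetwork S R) (x : R → ℝ) : Set R :=
  (N.face x ∪ N.jammed x)ᶜ

/-- The local rate function `L(x, D) = ∑_{ij ∈ Λ(x) ∪ Λ₁(x)} l(D_ij ‖ λ_ij, μ_ij(x))`
(its finite part; `L(x,D) = +∞` when `D_ij < 0` for some `ij ∉ Λ(x)`). -/
def locRate (N : StarNetwork S R) (x D : R → ℝ) : ℝ :=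
  ∑ r : R, if r ∈ N.face x ∪ N.jammed x then mmCost (D r) (N.lam r) (N.srv x r) else 0

/-- The sample path rate function `I_T(φ) = ∫₀ᵀ L(φ(t), φ̇(t)) dt ∈ [0,∞]` if `φ` is
absolutely continuous on `[0,T]`, and `I_T(φ) = +∞` otherwise (the infimum over an
empty family is `⊤`; any two densities of `φ` coincide a.e. on `[0,T]`, so the
infimum is the common value of the integral). -/
def pathRate (N : StarNetwork S R) (T : ℝ) (φ : ℝ → R → ℝ) : ℝ≥0∞ :=
  ⨅ (f : ℝ → R → ℝ) (_ : IntegrableOn f (Set.Icc 0 T))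
    (_ : ∀ t ∈ Set.Icc (0 : ℝ) T, φ t = φ 0 + ∫ s in (0 : ℝ)..t, f s),
    ∫⁻ t in Set.Ioc (0 : ℝ) T, ENNReal.ofReal (N.locRate (φ t) (f t))

end StarNetwork


/-- strict monotonicity of `t ↦ t + √(t²+c)` for `c > 0`. -/
lemma add_sqrt_strictMono {c : ℝ} (hc : 0 < c) :
    StrictMono fun t : ℝ => t + Real.sqrt (t ^ 2 + c) := by
  intro u v huv
  set su := Real.sqrt (u ^ 2 + c) with hsu_def
  set sv := Real.sqrt (v ^ 2 + c) with hsv_def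
  have hsu : su ^ 2 = u ^ 2 + c := Real.sq_sqrt (by positivity)
  have hsv : sv ^ 2 = v ^ 2 + c := Real.sq_sqrt (by positivity)
  have hu : |u| < su := by
    rw [hsu_def]; exact (Real.lt_sqrt (abs_nonneg u)).2 (by rw [sq_abs]; linarith)
  have hv : |v| < sv := by
    rw [hsv_def]; exact (Real.lt_sqrt (abs_nonneg v)).2 (by rw [sq_abs]; linarith)
  have hu1 : u < su := lt_of_le_of_lt (le_abs_self u) hu
  have hu2 : -u < su := lt_of_le_of_lt (neg_le_abs u) hu
  have hv1 : v < sv := lt_of_le_of_lt (le_abs_self v) hv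
  have hv2 : -v < sv := lt_of_le_of_lt (neg_le_abs v) hv
  -- first: s(t) - t is strictly antitone:  sv - v < su - u
  have hkey : sv - v < su - u := by
    rcases le_or_gt sv su with h | h
    · linarith
    · -- su < sv
      have hsum : 0 < su + sv := by linarith
      have e : (sv - su) * (sv + su) = (v - u) * (v + u) := by
        have := hsu; have := hsv; nlinarith [hsu, hsv]
      nlinarith [e, hsum, huv, hu1, hv1]
  have hPQ : (u + su) * (su - u) = c := by nlinarith [hsu]
  have hQP : (v + sv) * (sv - v) = c := by nlinarith [hsv]
  have hP : 0 < u + su := by linarith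
  have hQ : 0 < v + sv := by linarith
  have h1 : 0 < sv - v := by linarith
  show u + su < v + sv
  nlinarith [hPQ, hQP, hP, hQ, h1, hkey]

lemma mm_setup {lam mu : ℝ} (hl : 0 < lam) (hm : 0 < mu) (t : ℝ) :
    0 < (t + Real.sqrt (t ^ 2 + 4 * lam * mu)) / (2 * lam) ∧
    lam * ((t + Real.sqrt (t ^ 2 + 4 * lam * mu)) / (2 * lam))
      + mu / ((t + Real.sqrt (t ^ 2 + 4 * lam * mu)) / (2 * lam))
      = Real.sqrt (t ^ 2 + 4 * lam * mu) ∧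
    lam * ((t + Real.sqrt (t ^ 2 + 4 * lam * mu)) / (2 * lam))
      - mu / ((t + Real.sqrt (t ^ 2 + 4 * lam * mu)) / (2 * lam)) = t := by
  set s := Real.sqrt (t ^ 2 + 4 * lam * mu) with hs_def
  have hs : s ^ 2 = t ^ 2 + 4 * lam * mu := Real.sq_sqrt (by positivity)
  have ht : |t| < s := by
    rw [hs_def]; exact (Real.lt_sqrt (abs_nonneg t)).2 (by rw [sq_abs]; nlinarith)
  have ht1 : -t < s := lt_of_le_of_lt (neg_le_abs t) ht
  have hts : 0 < t + s := by linarith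
  have hy : 0 < (t + s) / (2 * lam) := by positivity
  refine ⟨hy, ?_, ?_⟩
  · field_simp
    nlinarith [hs]
  · field_simp
    nlinarith [hs]

lemma mm_slack {lam mu : ℝ} (hl : 0 < lam) (hm : 0 < mu) (t θ : ℝ) :
    mmCost t lam mu - (θ * t - lam * (Real.exp θ - 1) - mu * (Real.exp (-θ) - 1))
      = lam * ((t + Real.sqrt (t ^ 2 + 4 * lam * mu)) / (2 * lam)) *
          (Real.exp (θ - Real.log ((t + Real.sqrt (t ^ 2 + 4 * lam * mu)) / (2 * lam)))
            - (θ - Real.log ((t + Real.sqrt (t ^ 2 + 4 * lam * mu)) / (2 * lam))) - 1)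
        + (mu / ((t + Real.sqrt (t ^ 2 + 4 * lam * mu)) / (2 * lam))) *
          (Real.exp (-(θ - Real.log ((t + Real.sqrt (t ^ 2 + 4 * lam * mu)) / (2 * lam))))
            + (θ - Real.log ((t + Real.sqrt (t ^ 2 + 4 * lam * mu)) / (2 * lam))) - 1) := by
  obtain ⟨hy, hs, ht⟩ := mm_setup hl hm t
  have hmm : mmCost t lam mu
      = t * Real.log ((t + Real.sqrt (t ^ 2 + 4 * lam * mu)) / (2 * lam)) + lam + mu
        - Real.sqrt (t ^ 2 + 4 * lam * mu) := rfl
  set s := Real.sqrt (t ^ 2 + 4 * lam * mu) with hs_def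
  set y := (t + s) / (2 * lam) with hy_def
  clear_value y
  clear hy_def hs_def
  have hyne : y ≠ 0 := ne_of_gt hy
  have e1 : Real.exp (θ - Real.log y) = Real.exp θ / y := by
    rw [Real.exp_sub, Real.exp_log hy]
  have e2 : Real.exp (-(θ - Real.log y)) = y * Real.exp (-θ) := by
    rw [neg_sub, Real.exp_sub, Real.exp_log hy, Real.exp_neg]
    field_simp
  rw [hmm, e1, e2]
  have hs' : lam * y ^ 2 + mu = s * y := by
    have := hs; field_simp at this; linarith
  have ht' : lam * y ^ 2 - mu = t * y := by
    have := ht; field_simp at this; linarith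
  field_simp
  linear_combination (θ - Real.log y) * ht' + hs'

lemma mm_dual_le {lam mu : ℝ} (hl : 0 < lam) (hm : 0 < mu) (t θ : ℝ) :
    θ * t - lam * (Real.exp θ - 1) - mu * (Real.exp (-θ) - 1) ≤ mmCost t lam mu := by
  have h := mm_slack hl hm t θ
  obtain ⟨hy, -, -⟩ := mm_setup hl hm t
  set y := (t + Real.sqrt (t ^ 2 + 4 * lam * mu)) / (2 * lam) with hy_def
  set u := θ - Real.log y with hu_def
  have h1 : u + 1 ≤ Real.exp u := Real.add_one_le_exp u
  have h2 : -u + 1 ≤ Real.exp (-u) := Real.add_one_le_exp (-u)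
  nlinarith [mul_pos hl hy, div_pos hm hy]

lemma mm_dual_lt {lam mu : ℝ} (hl : 0 < lam) (hm : 0 < mu) (t θ : ℝ)
    (hθ : θ ≠ Real.log ((t + Real.sqrt (t ^ 2 + 4 * lam * mu)) / (2 * lam))) :
    θ * t - lam * (Real.exp θ - 1) - mu * (Real.exp (-θ) - 1) < mmCost t lam mu := by
  have h := mm_slack hl hm t θ
  obtain ⟨hy, -, -⟩ := mm_setup hl hm t
  set y := (t + Real.sqrt (t ^ 2 + 4 * lam * mu)) / (2 * lam) with hy_def
  set u := θ - Real.log y with hu_def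
  have hu : u ≠ 0 := sub_ne_zero.2 hθ
  have h1 : u + 1 < Real.exp u := Real.add_one_lt_exp hu
  have h2 : -u + 1 ≤ Real.exp (-u) := Real.add_one_le_exp (-u)
  nlinarith [mul_pos hl hy, div_pos hm hy]

lemma mm_dual_eq {lam mu : ℝ} (hl : 0 < lam) (hm : 0 < mu) (t : ℝ) :
    mmCost t lam mu
      = Real.log ((t + Real.sqrt (t ^ 2 + 4 * lam * mu)) / (2 * lam)) * t
        - lam * (Real.exp (Real.log ((t + Real.sqrt (t ^ 2 + 4 * lam * mu)) / (2 * lam))) - 1)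
        - mu * (Real.exp (-Real.log ((t + Real.sqrt (t ^ 2 + 4 * lam * mu)) / (2 * lam))) - 1) := by
  have h := mm_slack hl hm t (Real.log ((t + Real.sqrt (t ^ 2 + 4 * lam * mu)) / (2 * lam)))
  simp only [sub_self, Real.exp_zero, neg_zero] at h
  linarith [h]

/-! μ = 0 versions -/

lemma mm0_eq {lam : ℝ} (hl : 0 < lam) {t : ℝ} (ht : 0 < t) :
    mmCost t lam 0 = t * Real.log (t / lam) - t + lam := by
  have h4 : t ^ 2 + 4 * lam * 0 = t ^ 2 := by ring
  have hsq : Real.sqrt (t ^ 2 + 4 * lam * 0) = t := by rw [h4, Real.sqrt_sq ht.le]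
  unfold mmCost
  rw [hsq]
  have : (t + t) / (2 * lam) = t / lam := by ring
  rw [this]
  ring

lemma mm0_zero {lam : ℝ} (hl : 0 < lam) : mmCost 0 lam 0 = lam := by
  unfold mmCost
  norm_num

lemma mm0_dual_le {lam : ℝ} (hl : 0 < lam) {t : ℝ} (ht : 0 ≤ t) (θ : ℝ) :
    θ * t - lam * (Real.exp θ - 1) ≤ mmCost t lam 0 := by
  rcases eq_or_lt_of_le ht with h | h
  · rw [← h, mm0_zero hl]
    nlinarith [Real.exp_pos θ, mul_pos hl (Real.exp_pos θ)]
  · rw [mm0_eq hl h]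
    have hu : θ - Real.log (t / lam) + 1 ≤ Real.exp (θ - Real.log (t / lam)) :=
      Real.add_one_le_exp _
    have he : t * Real.exp (θ - Real.log (t / lam)) = lam * Real.exp θ := by
      rw [Real.exp_sub, Real.exp_log (by positivity)]
      field_simp
    have key : t * (θ - Real.log (t / lam) + 1) ≤ lam * Real.exp θ :=
      he ▸ mul_le_mul_of_nonneg_left hu h.le
    nlinarith [key]

lemma mm0_dual_lt {lam : ℝ} (hl : 0 < lam) {t : ℝ} (ht : 0 ≤ t) (θ : ℝ)
    (hθ : t = 0 ∨ θ ≠ Real.log (t / lam)) :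
    θ * t - lam * (Real.exp θ - 1) < mmCost t lam 0 := by
  rcases hθ with h | h
  · subst h
    rw [mm0_zero hl]
    nlinarith [mul_pos hl (Real.exp_pos θ)]
  · rcases eq_or_lt_of_le ht with h0 | h0
    · rw [← h0, mm0_zero hl]
      nlinarith [mul_pos hl (Real.exp_pos θ)]
    · rw [mm0_eq hl h0]
      have hu : θ - Real.log (t / lam) + 1 < Real.exp (θ - Real.log (t / lam)) :=
        Real.add_one_lt_exp (sub_ne_zero.2 h)
      have he : t * Real.exp (θ - Real.log (t / lam)) = lam * Real.exp θ := by
        rw [Real.exp_sub, Real.exp_log (by positivity)]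
        field_simp
      have key : t * (θ - Real.log (t / lam) + 1) < lam * Real.exp θ :=
        he ▸ mul_lt_mul_of_pos_left hu h0
      nlinarith [key]

lemma mm0_dual_eq {lam : ℝ} (hl : 0 < lam) {t : ℝ} (ht : 0 < t) :
    mmCost t lam 0
      = Real.log (t / lam) * t - lam * (Real.exp (Real.log (t / lam)) - 1) := by
  rw [mm0_eq hl ht, Real.exp_log (by positivity)]
  field_simp
  ring

lemma mmCost_nonneg {lam mu t : ℝ} (hl : 0 < lam)
    (h : 0 < mu ∨ (mu = 0 ∧ 0 ≤ t)) : 0 ≤ mmCost t lam mu := by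
  rcases h with hm | ⟨hm, ht⟩
  · have := mm_dual_le hl hm t 0
    simp only [Real.exp_zero, neg_zero, zero_mul, sub_self, mul_zero, sub_zero, zero_sub] at this
    linarith
  · subst hm
    have := mm0_dual_le hl ht 0
    simp only [Real.exp_zero, zero_mul, sub_self, mul_zero, zero_sub] at this
    linarith

lemma exp_facts : Real.exp (-1) ≤ 1 ∧ (1:ℝ) ≤ Real.exp 1 := by
  constructor
  · exact Real.exp_le_one_iff.mpr (by norm_num)
  · linarith [Real.add_one_le_exp (1:ℝ), Real.add_one_le_exp (0:ℝ)]

lemma mmCost_coer {lam mu t : ℝ} (hl : 0 < lam) (hmu : 0 ≤ mu)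
    (h : 0 < mu ∨ (mu = 0 ∧ 0 ≤ t)) :
    t - (lam + mu) * (Real.exp 1 - 1) ≤ mmCost t lam mu ∧
    -t - (lam + mu) * (Real.exp 1 - 1) ≤ mmCost t lam mu := by
  obtain ⟨hf1, hf2⟩ := exp_facts
  rcases h with hm | ⟨hm, ht⟩
  · have h1 := mm_dual_le hl hm t 1
    have h2 := mm_dual_le hl hm t (-1)
    rw [neg_neg] at h2
    constructor
    · nlinarith [h1]
    · nlinarith [h2]
  · subst hm
    have h1 := mm0_dual_le hl ht 1
    have h2 := mm0_dual_le hl ht (-1)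
    constructor
    · nlinarith [h1]
    · nlinarith [h2]

lemma mmCost_cont_pos {lam mu : ℝ} (hl : 0 < lam) (hm : 0 < mu) :
    Continuous fun t => mmCost t lam mu := by
  have hsq : Continuous fun t : ℝ => Real.sqrt (t ^ 2 + 4 * lam * mu) :=
    Real.continuous_sqrt.comp (by continuity)
  have hlog : Continuous fun t : ℝ =>
      Real.log ((t + Real.sqrt (t ^ 2 + 4 * lam * mu)) / (2 * lam)) := by
    rw [continuous_iff_continuousAt]
    intro t
    obtain ⟨hy, -, -⟩ := mm_setup hl hm t
    exact ContinuousAt.log (((continuous_id.add hsq).div_const _).continuousAt) (ne_of_gt hy)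
  unfold mmCost
  exact (((continuous_id.mul hlog).add continuous_const).add continuous_const).sub hsq

lemma mmCost_cont_zero {lam : ℝ} (hl : 0 < lam) :
    Continuous fun t => mmCost t lam 0 := by
  have heq : (fun t => mmCost t lam 0)
      = fun t => (max t 0) * Real.log (max t 0) - (max t 0) * Real.log lam + lam - |t| := by
    funext t
    have h4 : t ^ 2 + 4 * lam * 0 = t ^ 2 := by ring
    rcases lt_trichotomy t 0 with ht | ht | ht
    · unfold mmCost
      rw [h4, Real.sqrt_sq_eq_abs, abs_of_neg ht, max_eq_right ht.le]
      norm_num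
    · subst ht
      rw [mm0_zero hl]
      simp
    · rw [mm0_eq hl ht, max_eq_left ht.le, abs_of_pos ht,
        Real.log_div (ne_of_gt ht) (ne_of_gt hl)]
      ring
  rw [heq]
  have hmax : Continuous fun t : ℝ => max t 0 := continuous_id.max continuous_const
  exact (((Real.continuous_mul_log.comp hmax).sub
    (hmax.mul continuous_const)).add continuous_const).sub continuous_abs

lemma theta_strictMono {lam mu : ℝ} (hl : 0 < lam) (hm : 0 < mu) :
    StrictMono fun t : ℝ =>
      Real.log ((t + Real.sqrt (t ^ 2 + 4 * lam * mu)) / (2 * lam)) := by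
  intro u v huv
  dsimp only
  have hyu := (mm_setup hl hm u).1
  have h2l : 0 < 2 * lam := by linarith
  have hmono := add_sqrt_strictMono (by positivity : 0 < 4 * lam * mu) huv
  dsimp only at hmono
  exact Real.log_lt_log hyu (by gcongr)


lemma mmCost_strictConvexCombo {lam mu t₁ t₂ : ℝ} (hl : 0 < lam)
    (hmu : 0 < mu ∨ (mu = 0 ∧ 0 ≤ t₁ ∧ 0 ≤ t₂)) (hne : t₁ ≠ t₂)
    {a b : ℝ} (ha : 0 < a) (hb : 0 < b) (hab : a + b = 1) :
    mmCost (a * t₁ + b * t₂) lam mu < a * mmCost t₁ lam mu + b * mmCost t₂ lam mu := by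
  have hc1 : a * t₁ + b * t₂ ≠ t₁ := by
    intro h; apply hne
    have hb0 : b * (t₂ - t₁) = 0 := by linear_combination h - t₁ * hab
    rcases mul_eq_zero.1 hb0 with h' | h'
    · exact absurd h' (ne_of_gt hb)
    · linarith
  have hc2 : a * t₁ + b * t₂ ≠ t₂ := by
    intro h; apply hne
    have ha0 : a * (t₁ - t₂) = 0 := by linear_combination h - t₂ * hab
    rcases mul_eq_zero.1 ha0 with h' | h'
    · exact absurd h' (ne_of_gt ha)
    · linarith
  rcases hmu with hm | ⟨hm0, h1, h2⟩
  · set θc := Real.log ((a * t₁ + b * t₂ +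
      Real.sqrt ((a * t₁ + b * t₂) ^ 2 + 4 * lam * mu)) / (2 * lam)) with hθc_def
    have e := mm_dual_eq hl hm (a * t₁ + b * t₂)
    have l₁ := mm_dual_lt hl hm t₁ θc
      (fun h => hc1 ((theta_strictMono hl hm).injective (hθc_def ▸ h.symm)).symm)
    have l₂ := mm_dual_lt hl hm t₂ θc
      (fun h => hc2 ((theta_strictMono hl hm).injective (hθc_def ▸ h.symm)).symm)
    have hcomb : mmCost (a * t₁ + b * t₂) lam mu
        = a * (θc * t₁ - lam * (Real.exp θc - 1) - mu * (Real.exp (-θc) - 1))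
          + b * (θc * t₂ - lam * (Real.exp θc - 1) - mu * (Real.exp (-θc) - 1)) := by
      rw [← hθc_def] at e
      linear_combination e + (lam * (Real.exp θc - 1) + mu * (Real.exp (-θc) - 1)) * hab
    rw [hcomb]
    have k₁ := mul_lt_mul_of_pos_left l₁ ha
    have k₂ := mul_lt_mul_of_pos_left l₂ hb
    linarith
  · subst hm0
    have hc : 0 < a * t₁ + b * t₂ := by
      rcases (lt_or_eq_of_le h1) with p | p
      · nlinarith [mul_pos ha p, mul_nonneg hb.le h2]
      · rcases (lt_or_eq_of_le h2) with q | q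
        · nlinarith [mul_pos hb q, mul_nonneg ha.le h1]
        · exact absurd (p.symm.trans q) hne
    set θc := Real.log ((a * t₁ + b * t₂) / lam) with hθc_def
    have e := mm0_dual_eq hl hc
    have inj : ∀ t : ℝ, 0 < t → θc = Real.log (t / lam) → a * t₁ + b * t₂ = t := by
      intro t ht h
      have := congrArg Real.exp h
      rw [hθc_def] at this
      rw [Real.exp_log (by positivity), Real.exp_log (by positivity)] at this
      field_simp at this
      exact this
    have l₁ := mm0_dual_lt hl h1 θc (by
      rcases (lt_or_eq_of_le h1) with p | p
      · exact Or.inr fun h => hc1 (inj t₁ p h)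
      · exact Or.inl p.symm)
    have l₂ := mm0_dual_lt hl h2 θc (by
      rcases (lt_or_eq_of_le h2) with p | p
      · exact Or.inr fun h => hc2 (inj t₂ p h)
      · exact Or.inl p.symm)
    have hcomb : mmCost (a * t₁ + b * t₂) lam 0
        = a * (θc * t₁ - lam * (Real.exp θc - 1))
          + b * (θc * t₂ - lam * (Real.exp θc - 1)) := by
      rw [← hθc_def] at e
      linear_combination e + (lam * (Real.exp θc - 1)) * hab
    rw [hcomb]
    have k₁ := mul_lt_mul_of_pos_left l₁ ha
    have k₂ := mul_lt_mul_of_pos_left l₂ hb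
    linarith

section MainProofHelpers

variable {S R : Type*} [Fintype S] [Fintype R]

lemma srv_nonneg (N : StarNetwork S R) (x : R → ℝ) (hx : ∀ r, 0 ≤ x r) (r : R) :
    0 ≤ N.srv x r := by
  unfold StarNetwork.srv
  split
  · rename_i h
    have h1 : (0:ℝ) ≤ N.C (N.fst r) / N.load x (N.fst r) := by
      apply div_nonneg (N.C_pos _).le
      apply Finset.sum_nonneg
      intro r' _
      split <;> simp [hx r']
    have h2 : (0:ℝ) ≤ N.C (N.snd r) / N.load x (N.snd r) := by
      apply div_nonneg (N.C_pos _).le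
      apply Finset.sum_nonneg
      intro r' _
      split <;> simp [hx r']
    exact mul_nonneg (mul_nonneg (N.mu_pos r).le (hx r)) (le_min h1 h2)
  · exact le_refl 0

lemma load_pos (N : StarNetwork S R) (x : R → ℝ) (hx : ∀ r, 0 ≤ x r) {r : R} {i : S}
    (hi : N.touches i r) (hr : 0 < x r) : 0 < N.load x i := by
  have hle : (if N.touches i r then x r else 0) ≤ N.load x i := by
    apply Finset.single_le_sum (f := fun r' => if N.touches i r' then x r' else 0)
      (fun r' _ => by split <;> simp [hx r']) (Finset.mem_univ r)
  rw [if_pos hi] at hle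
  linarith

lemma srv_pos (N : StarNetwork S R) (x : R → ℝ) (hx : ∀ r, 0 ≤ x r) {r : R}
    (hr : r ∈ N.face x) : 0 < N.srv x r := by
  have hr' : 0 < x r := hr
  have h1 : 0 < N.load x (N.fst r) := load_pos N x hx (Or.inl rfl) hr'
  have h2 : 0 < N.load x (N.snd r) := load_pos N x hx (Or.inr rfl) hr'
  unfold StarNetwork.srv
  rw [if_pos hr']
  exact mul_pos (mul_pos (N.mu_pos r) hr')
    (lt_min (div_pos (N.C_pos _) h1) (div_pos (N.C_pos _) h2))

lemma srv_zero (N : StarNetwork S R) (x : R → ℝ) {r : R} (hr : x r = 0) :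
    N.srv x r = 0 := by
  unfold StarNetwork.srv
  rw [if_neg (by rw [hr]; exact lt_irrefl 0)]

end MainProofHelpers

/-- Fix `x ∈ ℝ₊^R` and consider the convex set
`𝒟 = {D ∈ ℝ^R : D_ij = 0 ∀ ij ∈ Λ₂(x), D_ij ≥ 0 ∀ ij ∈ Λ₁(x)}`.  Then `D ↦ L(x,D)` is
(finite,) nonnegative, continuous and strictly convex on `𝒟`, and for every `K ≥ 0` the
level set `{D ∈ 𝒟 : L(x,D) ≤ K}` is compact. -/
theorem locRate_props {S R : Type*} [Fintype S] [Fintype R]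
    (N : StarNetwork S R) (x : R → ℝ) (hx : ∀ r, 0 ≤ x r)
    (𝒟 : Set (R → ℝ))
    (h𝒟 : 𝒟 = {D | (∀ r ∈ N.ergodicRoutes x, D r = 0) ∧ ∀ r ∈ N.jammed x, 0 ≤ D r}) :
    (∀ D ∈ 𝒟, 0 ≤ N.locRate x D) ∧
    ContinuousOn (N.locRate x) 𝒟 ∧
    StrictConvexOn ℝ 𝒟 (N.locRate x) ∧
    ∀ K : ℝ, 0 ≤ K → IsCompact {D ∈ 𝒟 | N.locRate x D ≤ K} := by
  subst h𝒟
  -- basic per-route facts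
  have hcont : Continuous (N.locRate x) := by
    unfold StarNetwork.locRate
    apply continuous_finset_sum
    intro r _
    by_cases hr : r ∈ N.face x ∪ N.jammed x
    · simp only [if_pos hr]
      rcases hr with hf | hj
      · exact (mmCost_cont_pos (N.lam_pos r) (srv_pos N x hx hf)).comp (continuous_apply r)
      · simp only [srv_zero N x hj.1]
        exact (mmCost_cont_zero (N.lam_pos r)).comp (continuous_apply r)
    · simp only [if_neg hr]
      exact continuous_const
  have hterm_nonneg : ∀ (D : R → ℝ), (∀ r ∈ N.jammed x, 0 ≤ D r) → ∀ r : R,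
      0 ≤ (if r ∈ N.face x ∪ N.jammed x then mmCost (D r) (N.lam r) (N.srv x r) else 0) := by
    intro D hD2 r
    by_cases hr : r ∈ N.face x ∪ N.jammed x
    · rw [if_pos hr]
      rcases hr with hf | hj
      · exact mmCost_nonneg (N.lam_pos r) (Or.inl (srv_pos N x hx hf))
      · exact mmCost_nonneg (N.lam_pos r) (Or.inr ⟨srv_zero N x hj.1, hD2 r hj⟩)
    · rw [if_neg hr]
  have hnonneg : ∀ D ∈ {D : R → ℝ | (∀ r ∈ N.ergodicRoutes x, D r = 0) ∧
      ∀ r ∈ N.jammed x, 0 ≤ D r}, 0 ≤ N.locRate x D := by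
    intro D hD
    exact Finset.sum_nonneg fun r _ => hterm_nonneg D hD.2 r
  refine ⟨hnonneg, hcont.continuousOn, ⟨?_, ?_⟩, ?_⟩
  · -- convexity of the domain
    intro D hD E hE a b ha hb hab
    refine ⟨fun r hr => ?_, fun r hr => ?_⟩
    · simp only [Pi.add_apply, Pi.smul_apply, smul_eq_mul, hD.1 r hr, hE.1 r hr,
        mul_zero, add_zero]
    · simp only [Pi.add_apply, Pi.smul_apply, smul_eq_mul]
      exact add_nonneg (mul_nonneg ha (hD.2 r hr)) (mul_nonneg hb (hE.2 r hr))
  · -- strict convexity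
    intro D hD E hE hne a b ha hb hab
    simp only [smul_eq_mul]
    have hexp : N.locRate x (a • D + b • E)
        = ∑ r : R, if r ∈ N.face x ∪ N.jammed x then
            mmCost (a * D r + b * E r) (N.lam r) (N.srv x r) else 0 := by
      unfold StarNetwork.locRate
      congr 1
    rw [hexp]
    unfold StarNetwork.locRate
    rw [Finset.mul_sum, Finset.mul_sum, ← Finset.sum_add_distrib]
    have hcase : ∀ r, r ∈ N.face x ∪ N.jammed x →
        (0 < N.srv x r ∨ (N.srv x r = 0 ∧ 0 ≤ D r ∧ 0 ≤ E r)) := by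
      intro r hr
      rcases hr with hf | hj
      · exact Or.inl (srv_pos N x hx hf)
      · exact Or.inr ⟨srv_zero N x hj.1, hD.2 r hj, hE.2 r hj⟩
    apply Finset.sum_lt_sum
    · intro r _
      by_cases hr : r ∈ N.face x ∪ N.jammed x
      · simp only [if_pos hr]
        by_cases hDE : D r = E r
        · rw [hDE]
          have h1 : a * E r + b * E r = E r := by rw [← add_mul, hab, one_mul]
          have h2 : a * mmCost (E r) (N.lam r) (N.srv x r)
              + b * mmCost (E r) (N.lam r) (N.srv x r)
              = mmCost (E r) (N.lam r) (N.srv x r) := by rw [← add_mul, hab, one_mul]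
          rw [h1, h2]
        · exact le_of_lt
            (mmCost_strictConvexCombo (N.lam_pos r) (hcase r hr) hDE ha hb hab)
      · simp only [if_neg hr]
        norm_num
    · obtain ⟨r₀, hr₀⟩ := Function.ne_iff.1 hne
      have hP : r₀ ∈ N.face x ∪ N.jammed x := by
        by_contra hP
        have hE' : r₀ ∈ N.ergodicRoutes x := hP
        rw [hD.1 r₀ hE', hE.1 r₀ hE'] at hr₀
        exact hr₀ rfl
      refine ⟨r₀, Finset.mem_univ _, ?_⟩
      simp only [if_pos hP]
      exact mmCost_strictConvexCombo (N.lam_pos r₀) (hcase r₀ hP) hr₀ ha hb hab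
  · -- compact level sets
    intro K hK
    set 𝒟' : Set (R → ℝ) := {D | (∀ r ∈ N.ergodicRoutes x, D r = 0) ∧
      ∀ r ∈ N.jammed x, 0 ≤ D r} with h𝒟'
    have hclosed𝒟 : IsClosed 𝒟' := by
      rw [h𝒟']
      have : {D : R → ℝ | (∀ r ∈ N.ergodicRoutes x, D r = 0) ∧
          ∀ r ∈ N.jammed x, 0 ≤ D r}
          = (⋂ r ∈ N.ergodicRoutes x, {D : R → ℝ | D r = 0})
            ∩ ⋂ r ∈ N.jammed x, {D : R → ℝ | 0 ≤ D r} := by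
        ext D; simp
      rw [this]
      exact (isClosed_biInter fun r _ =>
          isClosed_eq (continuous_apply r) continuous_const).inter
        (isClosed_biInter fun r _ =>
          isClosed_le continuous_const (continuous_apply r))
    have hclosed : IsClosed {D ∈ 𝒟' | N.locRate x D ≤ K} := by
      have : {D ∈ 𝒟' | N.locRate x D ≤ K} = 𝒟' ∩ (N.locRate x) ⁻¹' Set.Iic K := rfl
      rw [this]
      exact hclosed𝒟.inter (isClosed_Iic.preimage hcont)
    set hi : R → ℝ := fun r => K + (N.lam r + N.srv x r) * (Real.exp 1 - 1) with hhi
    have hMnonneg : ∀ r, 0 ≤ hi r := by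
      intro r
      have := exp_facts.2
      have h1 : 0 ≤ N.lam r + N.srv x r := by
        have := (N.lam_pos r).le
        have := srv_nonneg N x hx r
        linarith
      simp only [hhi]
      exact add_nonneg hK (mul_nonneg h1 (by linarith))
    apply IsCompact.of_isClosed_subset (isCompact_Icc (a := fun r => -(hi r)) (b := hi))
      hclosed
    intro D hD'
    obtain ⟨⟨hD1, hD2⟩, hle⟩ := hD'
    rw [Set.mem_Icc]
    have hbound : ∀ r, -(hi r) ≤ D r ∧ D r ≤ hi r := by
      intro r
      by_cases hr : r ∈ N.face x ∪ N.jammed x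
      · have hterm : mmCost (D r) (N.lam r) (N.srv x r) ≤ K := by
          have hsingle : (if r ∈ N.face x ∪ N.jammed x then
              mmCost (D r) (N.lam r) (N.srv x r) else 0) ≤ N.locRate x D :=
            Finset.single_le_sum (fun r' _ => hterm_nonneg D hD2 r') (Finset.mem_univ r)
          rw [if_pos hr] at hsingle
          linarith
        have hcoer := mmCost_coer (N.lam_pos r) (srv_nonneg N x hx r) (by
          rcases hr with hf | hj
          · exact Or.inl (srv_pos N x hx hf)
          · exact Or.inr ⟨srv_zero N x hj.1, hD2 r hj⟩)
        constructor
        · have := hcoer.2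
          simp only [hhi]
          linarith
        · have := hcoer.1
          simp only [hhi]
          linarith
      · have hzero : D r = 0 := hD1 r hr
        rw [hzero]
        exact ⟨by linarith [hMnonneg r], hMnonneg r⟩
    exact ⟨fun r => (hbound r).1, fun r => (hbound r).2⟩
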